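/- For every positive integer m, the number of ordinary partitions of m in which the largest part occurs exactly once and every other part value occurs exactly twice equals the number of partitions of m with n copies of n in which, when the parts are listed in ascending lexicographic order, the weighted difference between each pair of consecutive parts is exactly 0 and the smallest part has its value equal to its subscript (i.e., is of the form j_j). -/

import Mathlib

/-- Lexicographic order on parts `m_i = (m, i)` of a partition with n copies of n. -/
def LexLe (p q : ℕ × ℕ) : Prop := p.1 < q.1 ∨ (p.1 = q.1 ∧ p.2 ≤ q.2)

namespace Stmt18Aux


/-- Duplicate every element except the last. -/
def F : List ℕ → List ℕ
  | [] => []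
  | [a] => [a]
  | a :: b :: v => a :: a :: F (b :: v)

/-- From partial sums (with accumulator) to pairs. -/
def G : ℕ → List ℕ → List (ℕ × ℕ)
  | _, [] => []
  | p, a :: v => (a + p, a - p) :: G a v

theorem two_step {P : List ℕ → Prop} (h0 : P []) (h1 : ∀ a, P [a])
    (h2 : ∀ a b v, P (b :: v) → P (a :: b :: v)) : ∀ v, P v
  | [] => h0
  | [a] => h1 a
  | a :: b :: v => h2 a b v (two_step h0 h1 h2 (b :: v))

theorem mem_F : ∀ v : List ℕ, ∀ x, x ∈ F v ↔ x ∈ v := by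
  apply two_step
  · simp [F]
  · simp [F]
  · intro a b v ih x
    simp [F, ih x]

theorem F_sum : ∀ v : List ℕ, ∀ L, v.getLast? = some L → (F v).sum + L = 2 * v.sum := by
  apply two_step
  · simp
  · intro a L hL
    simp at hL
    simp [F, hL]
    omega
  · intro a b v ih L hL
    rw [List.getLast?_cons_cons] at hL
    have := ih L hL
    simp [F] at this ⊢
    omega

theorem F_inj : Function.Injective F := by
  intro v1
  induction v1 using two_step with
  | h0 => intro v2 h; match v2 with
    | [] => rfl
    | [a] => simp [F] at h
    | a :: b :: v => simp [F] at h
  | h1 a => intro v2 h; match v2 with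
    | [] => simp [F] at h
    | [a'] => simpa [F] using h
    | a' :: b' :: v => simp [F] at h
  | h2 a b v ih =>
    intro v2 h
    match v2 with
    | [] => simp [F] at h
    | [a'] => simp [F] at h
    | a' :: b' :: v' =>
      simp only [F, List.cons.injEq] at h
      obtain ⟨rfl, -, h3⟩ := h
      rw [ih h3]




theorem G_inj : ∀ v1 v2 : List ℕ, ∀ acc, G acc v1 = G acc v2 → v1 = v2 := by
  intro v1
  induction v1 with
  | nil => intro v2 acc h; cases v2 with
    | nil => rfl
    | cons a v => simp [G] at h
  | cons a v ih =>
    intro v2 acc h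
    cases v2 with
    | nil => simp [G] at h
    | cons a' v' =>
      simp only [G, List.cons.injEq, Prod.mk.injEq] at h
      obtain ⟨⟨h1, -⟩, h2⟩ := h
      have : a = a' := by omega
      subst this
      rw [ih v' a h2]

theorem G_fst_gt : ∀ v : List ℕ, ∀ acc, List.Chain (· < ·) acc v →
    ∀ q ∈ G acc v, 2 * acc < q.1 := by
  intro v
  induction v with
  | nil => simp [G]
  | cons a v ih =>
    intro acc hc q hq
    replace hc := List.chain_cons.mp hc
    rcases List.mem_cons.mp hq with rfl | hq
    · simp; omega
    · have := ih a hc.2 q hq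
      omega

theorem G_sorted : ∀ v : List ℕ, ∀ acc, List.Chain (· < ·) acc v →
    (G acc v).Pairwise LexLe := by
  intro v
  induction v with
  | nil => simp [G]
  | cons a v ih =>
    intro acc hc
    replace hc := List.chain_cons.mp hc
    rw [G, List.pairwise_cons]
    refine ⟨fun q hq => ?_, ih a hc.2⟩
    have := G_fst_gt v a hc.2 q hq
    left
    simp
    omega

theorem G_sum : ∀ v : List ℕ, ∀ acc L, v.getLast? = some L →
    ((G acc v).map Prod.fst).sum + L = 2 * v.sum + acc := by
  intro v
  induction v with
  | nil => simp
  | cons a v ih =>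
    intro acc L hL
    cases v with
    | nil => simp at hL; subst hL; simp [G]; omega
    | cons b v' =>
      rw [List.getLast?_cons_cons] at hL
      have := ih a L hL
      simp [G] at this ⊢
      omega

theorem charR_fwd : ∀ l : List (ℕ × ℕ), ∀ acc : ℕ,
    (∀ p ∈ l, 1 ≤ p.2 ∧ p.2 ≤ p.1) →
    (∀ p : ℕ × ℕ, l.head? = some p → p.1 = p.2 + 2 * acc) →
    l.Chain' (fun p q => (q.1 : ℤ) - (p.1 : ℤ) - (q.2 : ℤ) - (p.2 : ℤ) = 0) →
    ∃ v, List.Chain (· < ·) acc v ∧ G acc v = l := by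
  intro l
  induction l with
  | nil => intro acc _ _ _; exact ⟨[], List.Chain.nil, rfl⟩
  | cons p l ih =>
    intro acc hb hh hc
    have hp : p.1 = p.2 + 2 * acc := hh p rfl
    have hpb : 1 ≤ p.2 ∧ p.2 ≤ p.1 := hb p List.mem_cons_self
    replace hc := List.isChain_cons.mp hc
    obtain ⟨hhd, hc⟩ := hc
    obtain ⟨v, hv, hgv⟩ := ih (p.2 + acc) (fun q hq => hb q (List.mem_cons_of_mem _ hq))
      (fun q hq => by
        have := hhd q hq
        have h2 : (q.1 : ℤ) = q.2 + p.1 + p.2 := by omega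
        omega) hc
    refine ⟨(p.2 + acc) :: v, List.chain_cons.mpr ⟨by omega, hv⟩, ?_⟩
    rw [G, hgv]
    congr 1
    have : p.2 + acc - acc = p.2 := by omega
    rw [this]
    have : p.2 + acc + acc = p.1 := by omega
    rw [this]

theorem charR_bwd : ∀ v : List ℕ, ∀ acc, List.Chain (· < ·) acc v →
    (∀ p ∈ G acc v, 1 ≤ p.2 ∧ p.2 ≤ p.1) ∧
    (∀ p : ℕ × ℕ, (G acc v).head? = some p → p.1 = p.2 + 2 * acc) ∧
    (G acc v).Chain' (fun p q => (q.1 : ℤ) - (p.1 : ℤ) - (q.2 : ℤ) - (p.2 : ℤ) = 0) := by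
  intro v
  induction v with
  | nil => simp [G, List.Chain']
  | cons a v ih =>
    intro acc hc
    replace hc := List.chain_cons.mp hc
    obtain ⟨hlt, hch⟩ := hc
    obtain ⟨ihb, ihh, ihc⟩ := ih a hch
    refine ⟨?_, ?_, ?_⟩
    · intro p hp
      rcases List.mem_cons.mp hp with rfl | hp
      · simp; omega
      · exact ihb p hp
    · intro p hp
      simp [G] at hp
      subst hp
      simp
      omega
    · rw [G]; apply List.isChain_cons.mpr
      refine ⟨fun q hq => ?_, ihc⟩
      have hq1 : q.1 = q.2 + 2 * a := ihh q hq
      simp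
      omega






theorem chain_lt_head {a : ℕ} {v : List ℕ} (h : List.Chain (· < ·) a v) :
    ∀ x ∈ v, a < x := by
  replace h := List.isChain_iff_pairwise.mp h
  exact (List.pairwise_cons.mp h).1

theorem charL_bwd : ∀ v : List ℕ, v ≠ [] → List.Chain (· < ·) 0 v →
    (F v).Pairwise (· ≤ ·) ∧ (∀ x ∈ F v, 0 < x) ∧
    ∃ M, (F v).max? = some M ∧ (F v).count M = 1 ∧
      ∀ x ∈ F v, x ≠ M → (F v).count x = 2 := by
  apply two_step
  · intro h; exact absurd rfl h
  · intro a _ hc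
    have ha : 0 < a := (List.chain_cons.mp hc).1
    refine ⟨by simp [F], by simp [F]; omega, a, ?_, by simp [F], ?_⟩
    · rw [List.max?_eq_some_iff']
      simp [F]
    · intro x hx hxa
      rw [mem_F] at hx
      simp at hx
      exact absurd hx hxa
  · intro a b v ih hne hc
    replace hc := List.chain_cons.mp hc
    obtain ⟨ha0, hc⟩ := hc
    have hab : a < b := (List.chain_cons.mp hc).1
    have hc0 : List.Chain (· < ·) 0 (b :: v) :=
      List.chain_cons.mpr ⟨by omega, (List.chain_cons.mp hc).2⟩
    obtain ⟨hs', hp', M, hmax', hcnt1, hcnt2⟩ := ih (by simp) hc0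
    have hgt : ∀ x ∈ F (b :: v), a < x := fun x hx =>
      chain_lt_head hc x ((mem_F _ x).mp hx)
    have hMmem : M ∈ F (b :: v) ∧ ∀ x ∈ F (b :: v), x ≤ M :=
      List.max?_eq_some_iff'.mp hmax'
    have haM : a < M := hgt M hMmem.1
    have hanotin : a ∉ F (b :: v) := fun h => lt_irrefl a (hgt a h)
    have hFd : F (a :: b :: v) = a :: a :: F (b :: v) := rfl
    rw [hFd]
    refine ⟨?_, ?_, M, ?_, ?_, ?_⟩
    · rw [List.pairwise_cons, List.pairwise_cons]
      exact ⟨by simp; exact fun x hx => le_of_lt (hgt x hx),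
        fun x hx => le_of_lt (hgt x hx), hs'⟩
    · intro x hx
      rcases List.mem_cons.mp hx with rfl | hx
      · exact ha0
      rcases List.mem_cons.mp hx with rfl | hx
      · exact ha0
      · exact hp' x hx
    · rw [List.max?_eq_some_iff']
      refine ⟨by simp [hMmem.1], ?_⟩
      intro x hx
      rcases List.mem_cons.mp hx with rfl | hx
      · omega
      rcases List.mem_cons.mp hx with rfl | hx
      · omega
      · exact hMmem.2 x hx
    · rw [List.count_cons_of_ne (by omega), List.count_cons_of_ne (by omega)]
      exact hcnt1
    · intro x hx hxM
      rcases List.mem_cons.mp hx with rfl | hx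
      · rw [List.count_cons_self, List.count_cons_self,
          List.count_eq_zero_of_not_mem hanotin]
      rcases List.mem_cons.mp hx with rfl | hx
      · rw [List.count_cons_self, List.count_cons_self,
          List.count_eq_zero_of_not_mem hanotin]
      · have hxa : x ≠ a := fun h => hanotin (h ▸ hx)
        rw [List.count_cons_of_ne (Ne.symm (by omega)),
          List.count_cons_of_ne (Ne.symm (by omega))]
        exact hcnt2 x hx hxM

theorem charL_fwd : ∀ n : ℕ, ∀ l : List ℕ, l.length ≤ n → l.Pairwise (· ≤ ·) →
    (∀ x ∈ l, 0 < x) → ∀ M, l.max? = some M → l.count M = 1 →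
    (∀ x ∈ l, x ≠ M → l.count x = 2) →
    ∃ v, v ≠ [] ∧ List.Chain (· < ·) 0 v ∧ F v = l := by
  intro n
  induction n with
  | zero =>
    intro l hl _ _ M hmax _ _
    have : l = [] := List.length_eq_zero_iff.mp (Nat.le_zero.mp hl)
    subst this
    simp at hmax
  | succ n ih =>
    intro l hl hs hp M hmax h1 h2
    match l with
    | [] => simp at hmax
    | [a] =>
      have hMa : M = a := by
        have := (List.max?_eq_some_iff'.mp hmax).1
        simpa using this
      subst hMa
      exact ⟨[M], by simp, List.chain_cons.mpr ⟨hp M (by simp), List.Chain.nil⟩, rfl⟩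
    | a :: b :: t =>
      obtain ⟨hMmem, hMub⟩ := List.max?_eq_some_iff'.mp hmax
      rw [List.pairwise_cons] at hs
      obtain ⟨hale, hs'⟩ := hs
      have hab : a ≤ b := hale b (by simp)
      have haM : a ≠ M := by
        rintro rfl
        have hbM : b = a := le_antisymm (hMub b (by simp)) hab
        subst hbM
        simp [List.count_cons] at h1
      have hbeq : a = b := by
        by_contra hne
        have halt : a < b := lt_of_le_of_ne hab hne
        have hnotin : a ∉ b :: t := by
          intro h
          have hble : b ≤ a := by
            rcases List.mem_cons.mp h with rfl | h
            · rfl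
            · exact le_trans ((List.pairwise_cons.mp hs').1 a h) le_rfl
          omega
        have hc1 : (a :: b :: t).count a = 1 := by
          rw [List.count_cons_self, List.count_eq_zero_of_not_mem hnotin]
        have hc2 := h2 a (by simp) haM
        omega
      subst hbeq
      have hat : a ∉ t := by
        have := h2 a (by simp) haM
        simp [List.count_cons] at this
        exact List.count_eq_zero.mp (by omega)
      have hMt : M ∈ t := by
        rcases List.mem_cons.mp hMmem with h | h
        · exact absurd h.symm haM
        rcases List.mem_cons.mp h with h' | h'
        · exact absurd h'.symm haM
        · exact h'
      have hmax' : t.max? = some M :=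
        List.max?_eq_some_iff'.mpr ⟨hMt, fun x hx => hMub x (by simp [hx])⟩
      have hcnt1 : t.count M = 1 := by
        rwa [List.count_cons_of_ne haM,
          List.count_cons_of_ne haM] at h1
      have hcnt2 : ∀ x ∈ t, x ≠ M → t.count x = 2 := by
        intro x hx hxM
        have hxa : x ≠ a := fun h => hat (h ▸ hx)
        have h2x := h2 x (by simp [hx]) hxM
        rwa [List.count_cons_of_ne (Ne.symm hxa), List.count_cons_of_ne (Ne.symm hxa)] at h2x
      have hs'' : t.Pairwise (· ≤ ·) := (List.pairwise_cons.mp hs').2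
      obtain ⟨v, hvne, hvc, hFv⟩ := ih t (by simp at hl ⊢; omega) hs''
        (fun x hx => hp x (by simp [hx])) M hmax' hcnt1 hcnt2
      refine ⟨a :: v, by simp, ?_, ?_⟩
      · refine List.chain_cons.mpr ⟨hp a (by simp), ?_⟩
        unfold List.Chain at hvc
        rw [List.isChain_iff_pairwise] at hvc ⊢
        rw [List.pairwise_cons] at hvc ⊢
        refine ⟨?_, hvc.2⟩
        intro x hx
        have hxt : x ∈ t := hFv ▸ (mem_F v x).mpr hx
        have : a ≤ x := (List.pairwise_cons.mp hs').1 x hxt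
        have hxa : x ≠ a := fun h => hat (h ▸ hxt)
        omega
      · match v, hvne with
        | c :: v', _ =>
          show a :: a :: F (c :: v') = a :: a :: t
          rw [hFv]


end Stmt18Aux

open Stmt18Aux in

/-- Corollary 28 of the paper: ordinary partitions of `m` whose
largest part occurs exactly once and all other part values occur exactly twice
are equinumerous with partitions of `m` with n copies of n whose consecutive
weighted differences are all 0 and whose smallest part is of the form `j_j`. -/
theorem stmt18 (m : ℕ) (hm : 0 < m) :
    {l : List ℕ | l.Pairwise (· ≤ ·) ∧ (∀ x ∈ l, 0 < x) ∧ l.sum = m ∧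
      ∃ M, l.max? = some M ∧ l.count M = 1 ∧
        ∀ x ∈ l, x ≠ M → l.count x = 2}.ncard =
    {l : List (ℕ × ℕ) | l.Pairwise LexLe ∧ (∀ p ∈ l, 1 ≤ p.2 ∧ p.2 ≤ p.1) ∧
      (∀ p : ℕ × ℕ, l.head? = some p → p.1 = p.2) ∧
      l.Chain' (fun p q => (q.1 : ℤ) - (p.1 : ℤ) - (q.2 : ℤ) - (p.2 : ℤ) = 0) ∧
      (l.map Prod.fst).sum = m}.ncard := by
  classical
  set T : Set (List ℕ) :=
    {v | List.Chain (· < ·) 0 v ∧ ∃ L, v.getLast? = some L ∧ 2 * v.sum = m + L} with hTdef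
  have hFimg : {l : List ℕ | l.Pairwise (· ≤ ·) ∧ (∀ x ∈ l, 0 < x) ∧ l.sum = m ∧
      ∃ M, l.max? = some M ∧ l.count M = 1 ∧
        ∀ x ∈ l, x ≠ M → l.count x = 2} = F '' T := by
    ext l
    simp only [Set.mem_setOf_eq, Set.mem_image, hTdef]
    constructor
    · rintro ⟨hs, hp, hsum, M, hmax, h1, h2⟩
      obtain ⟨v, hvne, hvc, hFv⟩ := charL_fwd l.length l le_rfl hs hp M hmax h1 h2
      obtain ⟨L, hlast⟩ := Option.isSome_iff_exists.mp (List.getLast?_isSome.mpr hvne)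
      have hFs := F_sum v L hlast
      rw [hFv, hsum] at hFs
      exact ⟨v, ⟨hvc, L, hlast, by omega⟩, hFv⟩
    · rintro ⟨v, ⟨hvc, L, hlast, hsum⟩, rfl⟩
      have hvne : v ≠ [] := by rintro rfl; simp at hlast
      obtain ⟨hs, hp, M, hmax, h1, h2⟩ := charL_bwd v hvne hvc
      have hFs := F_sum v L hlast
      exact ⟨hs, hp, by omega, M, hmax, h1, h2⟩
  have hGimg : {l : List (ℕ × ℕ) | l.Pairwise LexLe ∧ (∀ p ∈ l, 1 ≤ p.2 ∧ p.2 ≤ p.1) ∧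
      (∀ p : ℕ × ℕ, l.head? = some p → p.1 = p.2) ∧
      l.Chain' (fun p q => (q.1 : ℤ) - (p.1 : ℤ) - (q.2 : ℤ) - (p.2 : ℤ) = 0) ∧
      (l.map Prod.fst).sum = m} = G 0 '' T := by
    ext l
    simp only [Set.mem_setOf_eq, Set.mem_image, hTdef]
    constructor
    · rintro ⟨hsort, hb, hh, hch, hsum⟩
      obtain ⟨v, hvc, hGv⟩ := charR_fwd l 0 hb
        (fun p hp => by have := hh p hp; omega) hch
      have hvne : v ≠ [] := by
        rintro rfl
        rw [← hGv] at hsum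
        simp [G] at hsum
        omega
      obtain ⟨L, hlast⟩ := Option.isSome_iff_exists.mp (List.getLast?_isSome.mpr hvne)
      have hGs := G_sum v 0 L hlast
      rw [hGv, hsum] at hGs
      exact ⟨v, ⟨hvc, L, hlast, by omega⟩, hGv⟩
    · rintro ⟨v, ⟨hvc, L, hlast, hsum⟩, rfl⟩
      obtain ⟨hb, hh, hch⟩ := charR_bwd v 0 hvc
      have hGs := G_sum v 0 L hlast
      exact ⟨G_sorted v 0 hvc, hb, fun p hp => by have := hh p hp; omega, hch, by omega⟩
  rw [hFimg, hGimg, Set.ncard_image_of_injective _ F_inj,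
    Set.ncard_image_of_injective _ (fun v1 v2 h => G_inj v1 v2 0 h)]
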